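/- Let S be a finite semigroup that is a left regular band of groups, with idempotent-power map ω. Then the relation s ≤ t defined by s·(ω t) = t is a partial order on S: it is reflexive (s ≤ s for all s), antisymmetric (s ≤ t and t ≤ s imply s = t), and transitive (s ≤ t and t ≤ u imply s ≤ u). -/
import Mathlib

private lemma lrbg_comm_pow {S : Type*} [Semigroup S] (s : S) :
    ∀ n : ℕ, s * (fun t => t * s)^[n] s = (fun t => t * s)^[n] s * s := by
  intro n
  induction n with
  | zero => rfl
  | succ n ih =>
    rw [Function.iterate_succ_apply']
    rw [← mul_assoc, ih]

private lemma lrbg_absorb_pow {S : Type*} [Semigroup S] (x u : S) (h : x * u = u) :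
    ∀ n : ℕ, x * (fun t => t * u)^[n] u = (fun t => t * u)^[n] u := by
  intro n
  induction n with
  | zero => exact h
  | succ n ih =>
    rw [Function.iterate_succ_apply']
    rw [← mul_assoc, ih]

/-- In a finite LRBG, the relation `s ≤ t ↔ s·(ω t) = t` is a
partial order: reflexive, antisymmetric and transitive. -/
theorem lrbg_le_is_partial_order {S : Type*} [Semigroup S] [Fintype S] (ω : S → S)
    (hidem : ∀ s : S, ω s * ω s = ω s)
    (hpow : ∀ s : S, ∃ n : ℕ, ω s = (fun t => t * s)^[n] s)
    (lrbg1 : ∀ s : S, ω s * s = s)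
    (lrbg2 : ∀ s t : S, s * t * ω s = s * t) :
    (∀ s : S, s * ω s = s) ∧
    (∀ s t : S, s * ω t = t → t * ω s = s → s = t) ∧
    (∀ s t u : S, s * ω t = t → t * ω u = u → s * ω u = u) := by
  have refl : ∀ s : S, s * ω s = s := by
    intro s
    obtain ⟨n, hn⟩ := hpow s
    rw [hn, lrbg_comm_pow, ← hn, lrbg1]
  refine ⟨refl, ?_, ?_⟩
  · intro s t hst hts
    calc s = t * ω s := hts.symm
    _ = (s * ω t) * ω s := by rw [hst]
    _ = s * ω t := lrbg2 s (ω t)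
    _ = t := hst
  · intro s t u hst htu
    have h1 : ω t * u = u := by
      calc ω t * u = ω t * (t * ω u) := by rw [htu]
      _ = (ω t * t) * ω u := (mul_assoc _ _ _).symm
      _ = t * ω u := by rw [lrbg1]
      _ = u := htu
    have h2 : ω t * ω u = ω u := by
      obtain ⟨n, hn⟩ := hpow u
      rw [hn]; exact lrbg_absorb_pow _ _ h1 n
    calc s * ω u = s * (ω t * ω u) := by rw [h2]
    _ = (s * ω t) * ω u := (mul_assoc _ _ _).symm
    _ = t * ω u := by rw [hst]
    _ = u := htu
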